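/- Let a ≥ 3 and suppose c = a^k − ∑_{i=0}^{k−1} r_i·a^i, where each r_i is an integer with 0 ≤ r_i < a. Then s_{n+k+1} = s_{n+k} + (a−1)·∑_{i=0}^{k−1} r_i·s_{n+i} + (d + ∑_{i=0}^{k−1} r_i)·s_1 + ((a−1)·s_0 + (a−2)·d − a·∑_{i=0}^{k−1} r_i)·s_0 holds in ℤ, and the sum of the coefficients in this representation equals 1 + (a−1)·c·a^n. -/
import Mathlib


/-- case `a ≥ 3`: suppose `c = a^k − ∑_{i<k} r_i·a^i` with
`0 ≤ r_i < a`. Then, in ℤ,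
`s_{n+k+1} = s_{n+k} + (a−1)·∑_{i<k} r_i·s_{n+i} + (d + ∑ r_i)·s_1
  + ((a−1)·s_0 + (a−2)·d − a·∑ r_i)·s_0`,
and the sum of the coefficients in this representation is `1 + (a−1)·c·a^n`. -/
theorem stmt_8 (a c d n : ℕ) (ha : 3 ≤ a) (hc : 0 < c) (hd : 0 < d)
    (hdca : d < c * a) (hda : Nat.Coprime d a) (hdc : Nat.Coprime d c) (hn : 0 < n)
    (s : ℕ → ℕ) (hs : ∀ j, s j = c * a ^ (n + j) - d)
    (k : ℕ) (r : ℕ → ℕ) (hr : ∀ i < k, r i < a)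
    (hck : (c : ℤ) = a ^ k - ∑ i ∈ Finset.range k, (r i : ℤ) * a ^ i) :
    (s (n + k + 1) : ℤ) =
        (s (n + k) : ℤ) +
          ((a : ℤ) - 1) * ∑ i ∈ Finset.range k, (r i : ℤ) * (s (n + i) : ℤ) +
          ((d : ℤ) + ∑ i ∈ Finset.range k, (r i : ℤ)) * (s 1 : ℤ) +
          (((a : ℤ) - 1) * (s 0 : ℤ) + ((a : ℤ) - 2) * d -
              a * ∑ i ∈ Finset.range k, (r i : ℤ)) * (s 0 : ℤ) ∧
      1 + ((a : ℤ) - 1) * (∑ i ∈ Finset.range k, (r i : ℤ)) +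
          ((d : ℤ) + ∑ i ∈ Finset.range k, (r i : ℤ)) +
          (((a : ℤ) - 1) * (s 0 : ℤ) + ((a : ℤ) - 2) * d -
              a * ∑ i ∈ Finset.range k, (r i : ℤ)) =
        1 + ((a : ℤ) - 1) * c * a ^ n := by
  have ha1 : 1 ≤ a := by omega
  have hsz : ∀ j, (s j : ℤ) = c * a ^ (n + j) - d := by
    intro j
    have hle : d ≤ c * a ^ (n + j) := by
      calc d ≤ c * a := hdca.le
        _ ≤ c * a ^ (n + j) := by
          apply Nat.mul_le_mul_left
          calc a = a ^ 1 := (pow_one a).symm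
            _ ≤ a ^ (n + j) := Nat.pow_le_pow_right (by omega) (by omega)
    rw [hs j]
    push_cast [hle]
    ring
  have hk : (a : ℤ) ^ k = c + ∑ i ∈ Finset.range k, (r i : ℤ) * a ^ i := by
    linarith [hck]
  have hS : ∑ i ∈ Finset.range k, (r i : ℤ) * (s (n + i) : ℤ)
      = (c : ℤ) * a ^ n * a ^ n * (∑ i ∈ Finset.range k, (r i : ℤ) * a ^ i)
        - d * (∑ i ∈ Finset.range k, (r i : ℤ)) := by
    rw [Finset.mul_sum, Finset.mul_sum, ← Finset.sum_sub_distrib]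
    apply Finset.sum_congr rfl
    intro i _
    rw [hsz (n + i)]
    have : (a : ℤ) ^ (n + (n + i)) = a ^ n * a ^ n * a ^ i := by
      ring
    rw [this]; ring
  constructor
  · rw [hsz, hsz, hsz, hsz, hS]
    have e1 : (a : ℤ) ^ (n + (n + k + 1)) = a ^ n * a ^ n * a * a ^ k := by
      ring
    have e2 : (a : ℤ) ^ (n + (n + k)) = a ^ n * a ^ n * a ^ k := by
      ring
    have e3 : (a : ℤ) ^ (n + 1) = a ^ n * a := by ring
    have e4 : (a : ℤ) ^ (n + 0) = a ^ n := by rw [add_zero]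
    rw [e1, e2, e3, e4]
    linear_combination ((c : ℤ) * a ^ n * a ^ n * (a - 1)) * hk
  · rw [hsz]
    have e4 : (a : ℤ) ^ (n + 0) = a ^ n := by rw [add_zero]
    rw [e4]
    ring
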